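/- Fix a time series x of length n with values in ℝ^d and a warping path w of order m × n with warping matrix W and valence matrix V. Then the function F : (ℝ^d)^m → ℝ, F(p) = C_w(p,x), is differentiable everywhere, and its gradient at p is 2(Vp − Wx), i.e., for each time point i ∈ {1,…,m}, the partial gradient of F with respect to p_i ∈ ℝ^d equals 2(V_{ii} p_i − Σ_{j=1}^n W_{ij} x_j). -/

import Mathlib

open scoped RealInnerProductSpace

/-- A warping path of order `m × n` (0-based indexing: point `(i,j)` of the paper's
`{1,…,m} × {1,…,n}` corresponds to `(⟨i-1⟩, ⟨j-1⟩) : Fin m × Fin n`). -/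
structure WarpingPath (m n : ℕ) where
  steps : List (Fin m × Fin n)
  ne : steps ≠ []
  head_fst : (steps.head ne).1.val = 0
  head_snd : (steps.head ne).2.val = 0
  last_fst : (steps.getLast ne).1.val = m - 1
  last_snd : (steps.getLast ne).2.val = n - 1
  step : ∀ l : ℕ, (h : l + 1 < steps.length) →
    ((steps.get ⟨l + 1, h⟩).1.val = (steps.get ⟨l, Nat.lt_of_succ_lt h⟩).1.val + 1 ∧
      (steps.get ⟨l + 1, h⟩).2.val = (steps.get ⟨l, Nat.lt_of_succ_lt h⟩).2.val) ∨
    ((steps.get ⟨l + 1, h⟩).1.val = (steps.get ⟨l, Nat.lt_of_succ_lt h⟩).1.val ∧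
      (steps.get ⟨l + 1, h⟩).2.val = (steps.get ⟨l, Nat.lt_of_succ_lt h⟩).2.val + 1) ∨
    ((steps.get ⟨l + 1, h⟩).1.val = (steps.get ⟨l, Nat.lt_of_succ_lt h⟩).1.val + 1 ∧
      (steps.get ⟨l + 1, h⟩).2.val = (steps.get ⟨l, Nat.lt_of_succ_lt h⟩).2.val + 1)

/-- The cost `C_w(x,y) = Σ_l ‖x_{i_l} - y_{j_l}‖²` of aligning `x` and `y` along `w`. -/
noncomputable def cost {m n d : ℕ} (x : Fin m → EuclideanSpace ℝ (Fin d))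
    (y : Fin n → EuclideanSpace ℝ (Fin d)) (w : WarpingPath m n) : ℝ :=
  (w.steps.map (fun p => ‖x p.1 - y p.2‖ ^ 2)).sum

/-- The DTW distance `dtw(x,y) = min { √C_w(x,y) : w ∈ W_{m,n} }`. -/
noncomputable def dtw {m n d : ℕ} (x : Fin m → EuclideanSpace ℝ (Fin d))
    (y : Fin n → EuclideanSpace ℝ (Fin d)) : ℝ :=
  ⨅ w : WarpingPath m n, Real.sqrt (cost x y w)

/-- The warping matrix `W` of a warping path. -/
def warpMat {m n : ℕ} (w : WarpingPath m n) (i : Fin m) (j : Fin n) : ℕ :=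
  if (i, j) ∈ w.steps then 1 else 0

/-- The diagonal entries `V_{ii} = Σ_j W_{ij}` of the valence matrix of a warping path. -/
def valence {m n : ℕ} (w : WarpingPath m n) (i : Fin m) : ℕ :=
  ∑ j : Fin n, warpMat w i j

/-- Along a warping path, the sum of coordinates is strictly increasing. -/
lemma WarpingPath.sum_lt {m n : ℕ} (w : WarpingPath m n) :
    ∀ b : ℕ, (hb : b < w.steps.length) → ∀ a : ℕ, (hab : a < b) →
      (w.steps.get ⟨a, lt_trans hab hb⟩).1.val +
        (w.steps.get ⟨a, lt_trans hab hb⟩).2.val <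
      (w.steps.get ⟨b, hb⟩).1.val + (w.steps.get ⟨b, hb⟩).2.val := by
  intro b
  induction b with
  | zero => intro _ a ha; omega
  | succ b ih =>
    intro hb a ha
    have hb' : b < w.steps.length := Nat.lt_of_succ_lt hb
    have hstep := w.step b hb
    have hlt : (w.steps.get ⟨b, hb'⟩).1.val + (w.steps.get ⟨b, hb'⟩).2.val <
        (w.steps.get ⟨b + 1, hb⟩).1.val + (w.steps.get ⟨b + 1, hb⟩).2.val := by omega
    rcases Nat.lt_or_ge a b with h | h
    · exact lt_trans (ih hb' a h) hlt
    · have : a = b := by omega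
      subst this
      exact hlt

lemma WarpingPath.nodup {m n : ℕ} (w : WarpingPath m n) : w.steps.Nodup := by
  rw [List.Nodup, List.pairwise_iff_get]
  intro i j hij hEq
  have := w.sum_lt j.val j.isLt i.val hij
  rw [show w.steps.get ⟨i.val, _⟩ = w.steps.get i from by simp,
    show w.steps.get ⟨j.val, _⟩ = w.steps.get j from by simp, hEq] at this
  omega

lemma cost_eq_finset {m n d : ℕ} (x : Fin n → EuclideanSpace ℝ (Fin d))
    (w : WarpingPath m n) (q : Fin m → EuclideanSpace ℝ (Fin d)) :
    cost q x w = ∑ pr ∈ w.steps.toFinset, ‖q pr.1 - x pr.2‖ ^ 2 := by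
  rw [cost, List.sum_toFinset _ w.nodup]

lemma cost_hasFDerivAt {m n d : ℕ} (x : Fin n → EuclideanSpace ℝ (Fin d))
    (w : WarpingPath m n) (p : Fin m → EuclideanSpace ℝ (Fin d)) :
    HasFDerivAt (fun q : Fin m → EuclideanSpace ℝ (Fin d) => cost q x w)
      (∑ pr ∈ w.steps.toFinset,
        (2 : ℝ) • ((innerSL ℝ (p pr.1 - x pr.2)).comp
          (ContinuousLinearMap.proj (R := ℝ) (φ := fun _ : Fin m => EuclideanSpace ℝ (Fin d))
            pr.1))) p := by
  have : ∀ q : Fin m → EuclideanSpace ℝ (Fin d),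
      cost q x w = ∑ pr ∈ w.steps.toFinset, ‖q pr.1 - x pr.2‖ ^ 2 :=
    fun q => cost_eq_finset x w q
  simp only [funext this]
  apply HasFDerivAt.fun_sum
  intro pr _
  have h0 : HasFDerivAt (fun q : Fin m → EuclideanSpace ℝ (Fin d) => q pr.1)
      (ContinuousLinearMap.proj (R := ℝ) (φ := fun _ : Fin m => EuclideanSpace ℝ (Fin d)) pr.1)
      p :=
    (ContinuousLinearMap.proj (R := ℝ)
      (φ := fun _ : Fin m => EuclideanSpace ℝ (Fin d)) pr.1).hasFDerivAt
  have h1 := h0.sub_const (x pr.2)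
  have h2 := h1.norm_sq
  rw [← Nat.cast_smul_eq_nsmul ℝ 2] at h2
  exact_mod_cast h2

/-- For fixed `x` and a warping path `w` with warping matrix `W` and valence
matrix `V`, the map `F : p ↦ C_w(p,x)` is differentiable everywhere with gradient
`2(Vp - Wx)`; i.e. `DF(p)v = Σ_i ⟪2(V_{ii} p_i - Σ_j W_{ij} x_j), v_i⟫`. -/
theorem stmt8 (m n d : ℕ) (x : Fin n → EuclideanSpace ℝ (Fin d)) (w : WarpingPath m n) :
    Differentiable ℝ (fun p : Fin m → EuclideanSpace ℝ (Fin d) => cost p x w) ∧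
    ∀ p v : Fin m → EuclideanSpace ℝ (Fin d),
      fderiv ℝ (fun q : Fin m → EuclideanSpace ℝ (Fin d) => cost q x w) p v =
        ∑ i : Fin m,
          ⟪(2 : ℝ) • ((valence w i : ℝ) • p i - ∑ j : Fin n, (warpMat w i j : ℝ) • x j),
            v i⟫ := by
  constructor
  · exact fun p => (cost_hasFDerivAt x w p).differentiableAt
  · intro p v
    rw [(cost_hasFDerivAt x w p).fderiv]
    -- LHS: sum over steps
    have lhs : (∑ pr ∈ w.steps.toFinset,
        (2 : ℝ) • ((innerSL ℝ (p pr.1 - x pr.2)).comp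
          (ContinuousLinearMap.proj (R := ℝ) (φ := fun _ : Fin m => EuclideanSpace ℝ (Fin d))
            pr.1))) v
        = ∑ pr ∈ w.steps.toFinset, 2 * ⟪p pr.1 - x pr.2, v pr.1⟫ := by
      rw [ContinuousLinearMap.sum_apply]
      refine Finset.sum_congr rfl fun pr _ => ?_
      simp only [ContinuousLinearMap.smul_apply, ContinuousLinearMap.comp_apply,
        ContinuousLinearMap.proj_apply, innerSL_apply_apply, smul_eq_mul]
    rw [lhs]
    -- rewrite sum over toFinset as sum over all pairs with indicator
    have step1 : ∑ pr ∈ w.steps.toFinset, 2 * ⟪p pr.1 - x pr.2, v pr.1⟫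
        = ∑ pr : Fin m × Fin n, (warpMat w pr.1 pr.2 : ℝ) * (2 * ⟪p pr.1 - x pr.2, v pr.1⟫) := by
      rw [← Finset.sum_subset (Finset.subset_univ w.steps.toFinset)
        (fun pr _ hpr => by
          rw [List.mem_toFinset] at hpr
          simp [warpMat, hpr])]
      refine Finset.sum_congr rfl fun pr hpr => ?_
      rw [List.mem_toFinset] at hpr
      simp [warpMat, hpr]
    rw [step1, Fintype.sum_prod_type]
    apply Finset.sum_congr rfl
    intro i _
    rw [real_inner_smul_left, inner_sub_left, inner_smul_left, sum_inner]
    simp only [inner_sub_left, RCLike.conj_to_real, inner_smul_left]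
    rw [valence, Nat.cast_sum, Finset.sum_mul, ← Finset.sum_sub_distrib,
      Finset.mul_sum]
    apply Finset.sum_congr rfl
    intro j _
    ring
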